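/- arXiv:1701.08629 — 2 statements merged into one kernel-verified Lean document; each statement's English description precedes it below -/
import Mathlib

section
/- Let P ⊆ ℝ^d be a polytope with nonempty interior, and let F₁ and F₂ be a strictly antipodal pair of faces of P whose distance ρ(F₁,F₂) equals the minimum width ω(P). Then the Minkowski sum F₁ + F₂ has affine dimension d − 1. -/
open Set Metric Pointwise

noncomputable section

variable {d : ℕ}

abbrev Euc (d : ℕ) := EuclideanSpace ℝ (Fin d)

/-- A polytope is the convex hull of finitely many points. -/
def IsPolytope (P : Set (Euc d)) : Prop :=
  ∃ V : Finset (Euc d), P = convexHull ℝ (V : Set (Euc d))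

/-- A convex body is a compact convex set with nonempty interior. -/
def IsConvexBody (K : Set (Euc d)) : Prop :=
  Convex ℝ K ∧ IsCompact K ∧ (interior K).Nonempty

/-- Support function. -/
def suppFn (K : Set (Euc d)) (u : Euc d) : ℝ :=
  sSup {r | ∃ x ∈ K, r = inner ℝ u x}

/-- Width in direction `u`. -/
def dirWidth (K : Set (Euc d)) (u : Euc d) : ℝ :=
  suppFn K u + suppFn K (-u)

/-- Minimum width. -/
def minWidth (K : Set (Euc d)) : ℝ :=
  sInf {r | ∃ u : Euc d, ‖u‖ = 1 ∧ r = dirWidth K u}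

/-- A convex body is reduced if every convex body properly contained in it has
strictly smaller minimum width. -/
def IsReducedBody (K : Set (Euc d)) : Prop :=
  IsConvexBody K ∧ ∀ K' : Set (Euc d), IsConvexBody K' → K' ⊂ K → minWidth K' < minWidth K

/-- The intersection of `P` with the supporting hyperplane with outer normal `u`. -/
def suppSet (P : Set (Euc d)) (u : Euc d) : Set (Euc d) :=
  P ∩ {x | (inner ℝ u x : ℝ) = suppFn P u}

/-- A (proper, nonempty) face of a polytope. -/
def IsFaceOf (P F : Set (Euc d)) : Prop :=
  ∃ u : Euc d, ‖u‖ = 1 ∧ F = suppSet P u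

/-- Affine dimension of a set. -/
def affDim (A : Set (Euc d)) : ℕ :=
  Module.finrank ℝ (affineSpan ℝ A).direction

def IsVertexOf (P : Set (Euc d)) (v : Euc d) : Prop :=
  IsFaceOf P {v}

def IsEdgeOf (P F : Set (Euc d)) : Prop :=
  IsFaceOf P F ∧ affDim F = 1

def IsFacetOf (P F : Set (Euc d)) : Prop :=
  IsFaceOf P F ∧ affDim F = d - 1

/-- Distinct faces `F₁`, `F₂` are strictly antipodal if there is a unit direction `u`
with `H(P,u) ∩ P = F₁` and `H(P,-u) ∩ P = F₂`. -/
def StrictlyAntipodal (P F₁ F₂ : Set (Euc d)) : Prop :=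
  F₁ ≠ F₂ ∧ ∃ u : Euc d, ‖u‖ = 1 ∧ suppSet P u = F₁ ∧ suppSet P (-u) = F₂

/-- Distance between the affine hulls of `A` and `B`. -/
def affDist (A B : Set (Euc d)) : ℝ :=
  sInf {r | ∃ x ∈ (affineSpan ℝ A : Set (Euc d)), ∃ y ∈ (affineSpan ℝ B : Set (Euc d)),
    r = dist x y}

lemma inner_isLinearMap (w : Euc d) : IsLinearMap ℝ (fun x : Euc d => (inner ℝ w x : ℝ)) :=
  ⟨fun a b => inner_add_right w a b, fun c a => real_inner_smul_right w a c⟩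

lemma suppFn_exists_max {P : Set (Euc d)} {V : Finset (Euc d)}
    (hPV : P = convexHull ℝ (V : Set (Euc d))) (hV : V.Nonempty) (w : Euc d) :
    ∃ x ∈ V, x ∈ P ∧ (∀ y ∈ P, (inner ℝ w y : ℝ) ≤ inner ℝ w x) ∧ suppFn P w = inner ℝ w x := by
  obtain ⟨x, hxV, hmax⟩ := V.exists_max_image (fun y => (inner ℝ w y : ℝ)) hV
  have hxP : x ∈ P := hPV ▸ subset_convexHull ℝ (V : Set (Euc d)) hxV
  have hub : ∀ y ∈ P, (inner ℝ w y : ℝ) ≤ inner ℝ w x := by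
    intro y hy
    rw [hPV] at hy
    exact convexHull_min (fun z hz => hmax z hz)
      (convex_halfSpace_le (inner_isLinearMap w) _) hy
  refine ⟨x, hxV, hxP, hub, ?_⟩
  exact IsGreatest.csSup_eq ⟨⟨x, hxP, rfl⟩, fun r ⟨y, hy, hr⟩ => hr ▸ hub y hy⟩

lemma suppFn_smul {P : Set (Euc d)} {V : Finset (Euc d)}
    (hPV : P = convexHull ℝ (V : Set (Euc d))) (hV : V.Nonempty) (w : Euc d)
    {r : ℝ} (hr : 0 < r) : suppFn P (r • w) = r * suppFn P w := by
  obtain ⟨x, _, hxP, hub, hs⟩ := suppFn_exists_max hPV hV w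
  have : suppFn P (r • w) = (inner ℝ (r • w) x : ℝ) := by
    refine IsGreatest.csSup_eq ⟨⟨x, hxP, rfl⟩, fun s ⟨y, hy, hsy⟩ => ?_⟩
    rw [hsy, real_inner_smul_left, real_inner_smul_left]
    exact mul_le_mul_of_nonneg_left (hub y hy) hr.le
  rw [this, real_inner_smul_left, hs]

lemma vectorSpan_minkowski {A B : Set (Euc d)} (hA : A.Nonempty) (hB : B.Nonempty) :
    vectorSpan ℝ (A + B) = vectorSpan ℝ A ⊔ vectorSpan ℝ B := by
  obtain ⟨a₀, ha₀⟩ := hA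
  obtain ⟨b₀, hb₀⟩ := hB
  apply le_antisymm
  · rw [vectorSpan_def, Submodule.span_le]
    rintro z hz
    obtain ⟨p, hp, q, hq, rfl⟩ := hz
    obtain ⟨a₁, ha₁, b₁, hb₁, rfl⟩ := hp
    obtain ⟨a₂, ha₂, b₂, hb₂, rfl⟩ := hq
    have : (a₁ + b₁ : Euc d) -ᵥ (a₂ + b₂) = (a₁ -ᵥ a₂) + (b₁ -ᵥ b₂) := by
      simp [vsub_eq_sub]; abel
    show a₁ + b₁ -ᵥ (a₂ + b₂) ∈ _
    rw [this]
    exact Submodule.add_mem_sup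
      (Submodule.subset_span (vsub_mem_vsub ha₁ ha₂))
      (Submodule.subset_span (vsub_mem_vsub hb₁ hb₂))
  · refine sup_le ?_ ?_
    · rw [vectorSpan_def, Submodule.span_le]
      rintro z hz
      obtain ⟨a₁, ha₁, a₂, ha₂, rfl⟩ := hz
      have : (a₁ : Euc d) -ᵥ a₂ = (a₁ + b₀) -ᵥ (a₂ + b₀) := by
        simp [vsub_eq_sub]
      show a₁ -ᵥ a₂ ∈ _
      rw [this, vectorSpan_def]
      exact Submodule.subset_span
        (vsub_mem_vsub (add_mem_add ha₁ hb₀) (add_mem_add ha₂ hb₀))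
    · rw [vectorSpan_def, Submodule.span_le]
      rintro z hz
      obtain ⟨b₁, hb₁, b₂, hb₂, rfl⟩ := hz
      have : (b₁ : Euc d) -ᵥ b₂ = (a₀ + b₁) -ᵥ (a₀ + b₂) := by
        simp [vsub_eq_sub]
      show b₁ -ᵥ b₂ ∈ _
      rw [this, vectorSpan_def]
      exact Submodule.subset_span
        (vsub_mem_vsub (add_mem_add ha₀ hb₁) (add_mem_add ha₀ hb₂))

lemma bessel_two {u v z : Euc d} (hu : ‖u‖ = 1) (hv : ‖v‖ = 1)
    (huv : (inner ℝ u v : ℝ) = 0) :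
    (inner ℝ u z : ℝ) ^ 2 + (inner ℝ v z : ℝ) ^ 2 ≤ ‖z‖ ^ 2 := by
  set a : ℝ := inner ℝ u z
  set b : ℝ := inner ℝ v z
  have h0 : (0 : ℝ) ≤ inner ℝ (z - a • u - b • v) (z - a • u - b • v) :=
    real_inner_self_nonneg
  have hz : (inner ℝ z z : ℝ) = ‖z‖ ^ 2 := real_inner_self_eq_norm_sq z
  have huu : (inner ℝ u u : ℝ) = 1 := by
    rw [real_inner_self_eq_norm_sq, hu]; norm_num
  have hvv : (inner ℝ v v : ℝ) = 1 := by
    rw [real_inner_self_eq_norm_sq, hv]; norm_num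
  have hvu : (inner ℝ v u : ℝ) = 0 := by rw [real_inner_comm]; exact huv
  have huz : (inner ℝ u z : ℝ) = a := rfl
  have hvz : (inner ℝ v z : ℝ) = b := rfl
  have hzu : (inner ℝ z u : ℝ) = a := (real_inner_comm u z).trans huz
  have hzv : (inner ℝ z v : ℝ) = b := (real_inner_comm v z).trans hvz
  simp only [inner_sub_left, inner_sub_right, real_inner_smul_left, real_inner_smul_right,
    hz, huu, hvv, huv, hvu, huz, hvz, hzu, hzv] at h0
  nlinarith [h0]


lemma prod_abs_bound {t δ b M : ℝ} (h1 : -δ ≤ t) (h2 : t ≤ δ) (h3 : -M ≤ b) (h4 : b ≤ M) :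
    t * b ≤ δ * M ∧ -(δ * M) ≤ t * b := by
  constructor <;> nlinarith

set_option maxHeartbeats 2000000 in
/-- If `F₁` and `F₂` are strictly antipodal faces of a polytope `P ⊆ ℝ^d` with nonempty
interior, whose distance equals the minimum width of `P`, then the Minkowski sum
`F₁ + F₂` has affine dimension `d - 1`. -/
theorem gritzmann_klee {d : ℕ} (P F₁ F₂ : Set (Euc d))
    (hP : IsPolytope P) (hint : (interior P).Nonempty)
    (hF₁ : IsFaceOf P F₁) (hF₂ : IsFaceOf P F₂)
    (hanti : StrictlyAntipodal P F₁ F₂)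
    (hdist : affDist F₁ F₂ = minWidth P) :
    affDim (F₁ + F₂) = d - 1 := by
  classical
  obtain ⟨-, u, hu, hF1, hF2⟩ := hanti
  obtain ⟨V, hPV⟩ := hP
  obtain ⟨x₀, hx₀⟩ := hint
  have hx₀P : x₀ ∈ P := interior_subset hx₀
  have hV : V.Nonempty := by
    rcases V.eq_empty_or_nonempty with h | h
    · exfalso; rw [hPV, h] at hx₀P; simp at hx₀P
    · exact h
  obtain ⟨rb, hrb, hball⟩ : ∃ r > 0, ball x₀ r ⊆ P := by
    rcases Metric.mem_nhds_iff.1 (mem_interior_iff_mem_nhds.1 hx₀) with ⟨r, hr, hsub⟩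
    exact ⟨r, hr, hsub⟩
  -- generic upper bound
  have hub : ∀ w : Euc d, ∀ y ∈ P, (inner ℝ w y : ℝ) ≤ suppFn P w := by
    intro w y hy
    obtain ⟨x, -, -, hubx, hs⟩ := suppFn_exists_max hPV hV w
    rw [hs]; exact hubx y hy
  -- maximizers
  obtain ⟨x₁, hx₁V, hx₁P, hub₁, hs₁⟩ := suppFn_exists_max hPV hV u
  obtain ⟨x₂, hx₂V, hx₂P, hub₂, hs₂⟩ := suppFn_exists_max hPV hV (-u)
  set h₁ := suppFn P u with hh₁
  set h₂ := suppFn P (-u) with hh₂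
  have hx₁F : x₁ ∈ F₁ := by rw [← hF1]; exact ⟨hx₁P, hs₁.symm⟩
  have hx₂F : x₂ ∈ F₂ := by rw [← hF2]; exact ⟨hx₂P, hs₂.symm⟩
  -- width lower bound from interior ball
  have hwd_lb : ∀ w : Euc d, ‖w‖ = 1 → rb ≤ dirWidth P w := by
    intro w hw
    have hmem : ∀ s : ℝ, |s| < rb → x₀ + s • w ∈ P := by
      intro s hs
      apply hball
      rw [mem_ball_iff_norm]
      simp only [add_sub_cancel_left, norm_smul, hw, mul_one]
      exact hs
    have hp1 : x₀ + (rb/2) • w ∈ P := hmem _ (by rw [abs_of_pos (by linarith)]; linarith)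
    have hp2 : x₀ + (-(rb/2)) • w ∈ P := hmem _ (by rw [abs_of_neg (by linarith)]; linarith)
    have hww : (inner ℝ w w : ℝ) = 1 := by
      rw [real_inner_self_eq_norm_sq, hw]; norm_num
    have e1 : (inner ℝ w (x₀ + (rb/2) • w) : ℝ) = inner ℝ w x₀ + rb/2 := by
      rw [inner_add_right, real_inner_smul_right, hww]; ring
    have e2 : (inner ℝ (-w) (x₀ + (-(rb/2)) • w) : ℝ) = -(inner ℝ w x₀ : ℝ) + rb/2 := by
      rw [inner_neg_left, inner_add_right, real_inner_smul_right, hww]; ring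
    have b1 := hub w _ hp1
    have b2 := hub (-w) _ hp2
    rw [e1] at b1
    rw [e2] at b2
    show rb ≤ suppFn P w + suppFn P (-w)
    linarith
  -- minWidth facts
  have hSbdd : BddBelow {r | ∃ w : Euc d, ‖w‖ = 1 ∧ r = dirWidth P w} := by
    refine ⟨rb, ?_⟩
    rintro r ⟨w, hw, rfl⟩
    exact hwd_lb w hw
  have hmw_le : ∀ w : Euc d, ‖w‖ = 1 → minWidth P ≤ dirWidth P w := by
    intro w hw
    exact csInf_le hSbdd ⟨w, hw, rfl⟩
  have hw₀pos : 0 < h₁ + h₂ := lt_of_lt_of_le hrb (hwd_lb u hu)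
  -- constancy of ⟪u,·⟫ on the faces
  have hcu₁ : ∀ x ∈ F₁, (inner ℝ u x : ℝ) = h₁ := by
    intro x hx; rw [← hF1] at hx; exact hx.2
  have hcu₂ : ∀ y ∈ F₂, (inner ℝ u y : ℝ) = -h₂ := by
    intro y hy; rw [← hF2] at hy
    have h : (inner ℝ (-u) y : ℝ) = h₂ := hy.2
    rw [inner_neg_left] at h
    linarith
  -- vectorSpans are orthogonal to u
  have hVS : ∀ (F : Set (Euc d)) (c : ℝ), (∀ x ∈ F, (inner ℝ u x : ℝ) = c) →
      vectorSpan ℝ F ≤ (ℝ ∙ u)ᗮ := by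
    intro F c hc
    rw [vectorSpan_def, Submodule.span_le]
    rintro z ⟨p, hp, q, hq, rfl⟩
    show p -ᵥ q ∈ (((ℝ ∙ u)ᗮ : Submodule ℝ (Euc d)) : Set (Euc d))
    rw [SetLike.mem_coe, Submodule.mem_orthogonal_singleton_iff_inner_right]
    show (inner ℝ u (p - q) : ℝ) = 0
    rw [inner_sub_right, hc p hp, hc q hq]; ring
  set W : Submodule ℝ (Euc d) := vectorSpan ℝ F₁ ⊔ vectorSpan ℝ F₂ with hWdef
  have hWu : W ≤ (ℝ ∙ u)ᗮ := sup_le (hVS F₁ h₁ hcu₁) (hVS F₂ (-h₂) hcu₂)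
  -- constancy of ⟪u,·⟫ on affine spans
  have hconstu : ∀ (F : Set (Euc d)) (c : ℝ), (∀ x ∈ F, (inner ℝ u x : ℝ) = c) →
      ∀ x' ∈ F, ∀ x ∈ affineSpan ℝ F, (inner ℝ u x : ℝ) = c := by
    intro F c hc x' hx' x hx
    have hdiff : x -ᵥ x' ∈ vectorSpan ℝ F := by
      rw [← direction_affineSpan]
      exact AffineSubspace.vsub_mem_direction hx (subset_affineSpan ℝ F hx')
    have h0 := hVS F c hc hdiff
    rw [Submodule.mem_orthogonal_singleton_iff_inner_right] at h0
    have h0' : (inner ℝ u (x - x') : ℝ) = 0 := h0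
    rw [inner_sub_right] at h0'
    have := hc x' hx'
    linarith
  -- gap lemma
  have hgap : ∀ (w : Euc d) (F : Set (Euc d)), suppSet P w = F →
      ∃ ε > 0, ∀ x ∈ V, x ∉ F → (inner ℝ w x : ℝ) ≤ suppFn P w - ε := by
    intro w F hF
    by_cases hB : (V.filter (fun x => x ∉ F)).Nonempty
    · refine ⟨(V.filter (fun x => x ∉ F)).inf' hB (fun x => suppFn P w - inner ℝ w x), ?_, ?_⟩
      · rw [gt_iff_lt, Finset.lt_inf'_iff]
        intro x hx
        rw [Finset.mem_filter] at hx
        have hxP : x ∈ P := hPV ▸ subset_convexHull ℝ (V : Set (Euc d)) hx.1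
        have hle : (inner ℝ w x : ℝ) ≤ suppFn P w := hub w x hxP
        have hne : (inner ℝ w x : ℝ) ≠ suppFn P w := by
          intro h
          exact hx.2 (by rw [← hF]; exact ⟨hxP, h⟩)
        have := lt_of_le_of_ne hle hne
        linarith
      · intro x hxV hxF
        have h' : (V.filter (fun x => x ∉ F)).inf' hB (fun x => suppFn P w - (inner ℝ w x : ℝ))
            ≤ suppFn P w - inner ℝ w x :=
          Finset.inf'_le _ (Finset.mem_filter.2 ⟨hxV, hxF⟩)
        linarith
    · refine ⟨1, one_pos, fun x hxV hxF => absurd ⟨x, Finset.mem_filter.2 ⟨hxV, hxF⟩⟩ hB⟩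
  obtain ⟨ε₁, hε₁pos, hε₁⟩ := hgap u F₁ hF1
  obtain ⟨ε₂, hε₂pos, hε₂⟩ := hgap (-u) F₂ hF2
  -- norm bound on vertices
  set M : ℝ := V.sup' hV (fun x => ‖x‖) + 1 with hMdef
  have hM : ∀ x ∈ V, ‖x‖ ≤ M := by
    intro x hx
    have := Finset.le_sup' (f := fun x : Euc d => ‖x‖) hx
    simp only [hMdef]; linarith
  have hM0 : 0 ≤ M := le_trans (norm_nonneg x₁) (hM x₁ hx₁V)
  -- the key claim
  have key : ∀ v : Euc d, ‖v‖ = 1 → (inner ℝ u v : ℝ) = 0 → v ∈ Wᗮ → False := by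
    intro v hv huv hvW
    set c₁ : ℝ := inner ℝ v x₁ with hc₁def
    set c₂ : ℝ := inner ℝ v x₂ with hc₂def
    have hvW' := (Submodule.mem_orthogonal W v).1 hvW
    -- constancy of ⟪v,·⟫ on affine spans of faces
    have hconstv : ∀ (F : Set (Euc d)) (x' : Euc d), x' ∈ F → vectorSpan ℝ F ≤ W →
        ∀ x ∈ affineSpan ℝ F, (inner ℝ v x : ℝ) = inner ℝ v x' := by
      intro F x' hx' hFW x hx
      have hdiff : x -ᵥ x' ∈ vectorSpan ℝ F := by
        rw [← direction_affineSpan]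
        exact AffineSubspace.vsub_mem_direction hx (subset_affineSpan ℝ F hx')
      have h0 : (inner ℝ (x - x') v : ℝ) = 0 := hvW' _ (hFW hdiff)
      have h0' : (inner ℝ v (x - x') : ℝ) = 0 := by
        rw [real_inner_comm]; exact h0
      rw [inner_sub_right] at h0'
      linarith
    -- the distance lower bound
    have hρ_lb : Real.sqrt ((h₁ + h₂)^2 + (c₁ - c₂)^2) ≤ affDist F₁ F₂ := by
      apply le_csInf
      · exact ⟨dist x₁ x₂, x₁, subset_affineSpan ℝ F₁ hx₁F, x₂, subset_affineSpan ℝ F₂ hx₂F, rfl⟩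
      · rintro r ⟨x, hx, y, hy, rfl⟩
        have hux : (inner ℝ u x : ℝ) = h₁ := hconstu F₁ h₁ hcu₁ x₁ hx₁F x hx
        have huy : (inner ℝ u y : ℝ) = -h₂ := hconstu F₂ (-h₂) hcu₂ x₂ hx₂F y hy
        have hvx : (inner ℝ v x : ℝ) = c₁ := hconstv F₁ x₁ hx₁F le_sup_left x hx
        have hvy : (inner ℝ v y : ℝ) = c₂ := hconstv F₂ x₂ hx₂F le_sup_right y hy
        have hb := bessel_two (z := x - y) hu hv huv
        have e1 : (inner ℝ u (x - y) : ℝ) = h₁ + h₂ := by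
          rw [inner_sub_right, hux, huy]; ring
        have e2 : (inner ℝ v (x - y) : ℝ) = c₁ - c₂ := by
          rw [inner_sub_right, hvx, hvy]
        rw [e1, e2] at hb
        rw [dist_eq_norm]
        calc Real.sqrt ((h₁ + h₂)^2 + (c₁ - c₂)^2) ≤ Real.sqrt (‖x - y‖^2) :=
              Real.sqrt_le_sqrt hb
          _ = ‖x - y‖ := Real.sqrt_sq (norm_nonneg _)
    have hρw : h₁ + h₂ ≤ affDist F₁ F₂ := by
      refine le_trans (le_trans (le_of_eq (Real.sqrt_sq hw₀pos.le).symm)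
        (Real.sqrt_le_sqrt (by nlinarith [sq_nonneg (c₁ - c₂)]))) hρ_lb
    -- choose t
    set δ : ℝ := min ε₁ ε₂ / (2*M + 1) with hδdef
    have hδpos : 0 < δ := by
      apply div_pos (lt_min hε₁pos hε₂pos); linarith
    set t : ℝ := if c₁ - c₂ ≤ 0 then δ else -δ with htdef
    have htb : -δ ≤ t ∧ t ≤ δ := by
      constructor <;> · rw [htdef]; split <;> linarith
    have htne : t ≠ 0 := by
      rw [htdef]; split <;> [exact ne_of_gt hδpos; exact ne_of_lt (by linarith)]
    have htc : t * (c₁ - c₂) ≤ 0 := by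
      rw [htdef]; split
      · next h => exact mul_nonpos_of_nonneg_of_nonpos hδpos.le h
      · next h => exact mul_nonpos_of_nonpos_of_nonneg (by linarith) (by linarith)
    have hδε₁ : (2*M + 1) * δ ≤ ε₁ := by
      rw [hδdef, mul_div_cancel₀]
      · exact min_le_left _ _
      · linarith
    have hδε₂ : (2*M + 1) * δ ≤ ε₂ := by
      rw [hδdef, mul_div_cancel₀]
      · exact min_le_right _ _
      · linarith
    have hδε₁' : 2*(δ*M) + δ ≤ ε₁ := by nlinarith [hδε₁]
    have hδε₂' : 2*(δ*M) + δ ≤ ε₂ := by nlinarith [hδε₂]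
    have hbc₁ : |c₁| ≤ M := by
      have := abs_real_inner_le_norm v x₁
      rw [hv, one_mul] at this
      exact le_trans this (hM x₁ hx₁V)
    have hbc₂ : |c₂| ≤ M := by
      have := abs_real_inner_le_norm v x₂
      rw [hv, one_mul] at this
      exact le_trans this (hM x₂ hx₂V)
    -- support function in the perturbed direction
    have hsupp1 : suppFn P (u + t • v) = h₁ + t * c₁ := by
      apply IsGreatest.csSup_eq
      constructor
      · refine ⟨x₁, hx₁P, ?_⟩
        rw [inner_add_left, real_inner_smul_left, ← hs₁, ← hc₁def]
      · rintro r ⟨y, hy, rfl⟩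
        rw [hPV] at hy
        refine convexHull_min ?_ (convex_halfSpace_le (inner_isLinearMap (u + t • v)) (h₁ + t * c₁)) hy
        intro x hxV
        show (inner ℝ (u + t • v) x : ℝ) ≤ h₁ + t * c₁
        rw [inner_add_left, real_inner_smul_left]
        by_cases hxF : x ∈ F₁
        · rw [hcu₁ x hxF, hconstv F₁ x₁ hx₁F le_sup_left x (subset_affineSpan ℝ F₁ hxF)]
        · have hg := hε₁ x hxV hxF
          have hbx : |(inner ℝ v x : ℝ)| ≤ M := by
            have := abs_real_inner_le_norm v x
            rw [hv, one_mul] at this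
            exact le_trans this (hM x hxV)
          obtain ⟨hbx1, hbx2⟩ := abs_le.1 hbx
          obtain ⟨hc11, hc12⟩ := abs_le.1 hbc₁
          obtain ⟨ht1, ht2⟩ := htb
          obtain ⟨hup, -⟩ := prod_abs_bound ht1 ht2 hbx1 hbx2
          obtain ⟨-, hlo⟩ := prod_abs_bound ht1 ht2 hc11 hc12
          linarith
    have hsupp2 : suppFn P (-(u + t • v)) = h₂ - t * c₂ := by
      have hux₂ : (inner ℝ u x₂ : ℝ) = -h₂ := hcu₂ x₂ hx₂F
      apply IsGreatest.csSup_eq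
      constructor
      · refine ⟨x₂, hx₂P, ?_⟩
        rw [inner_neg_left, inner_add_left, real_inner_smul_left, hux₂, ← hc₂def]
        ring
      · rintro r ⟨y, hy, rfl⟩
        rw [hPV] at hy
        refine convexHull_min ?_ (convex_halfSpace_le (inner_isLinearMap (-(u + t • v))) (h₂ - t * c₂)) hy
        intro x hxV
        show (inner ℝ (-(u + t • v)) x : ℝ) ≤ h₂ - t * c₂
        rw [inner_neg_left, inner_add_left, real_inner_smul_left]
        by_cases hxF : x ∈ F₂
        · rw [hcu₂ x hxF, hconstv F₂ x₂ hx₂F le_sup_right x (subset_affineSpan ℝ F₂ hxF)]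
          linarith
        · have hg := hε₂ x hxV hxF
          rw [inner_neg_left] at hg
          have hbx : |(inner ℝ v x : ℝ)| ≤ M := by
            have := abs_real_inner_le_norm v x
            rw [hv, one_mul] at this
            exact le_trans this (hM x hxV)
          obtain ⟨hbx1, hbx2⟩ := abs_le.1 hbx
          obtain ⟨hc21, hc22⟩ := abs_le.1 hbc₂
          obtain ⟨ht1, ht2⟩ := htb
          obtain ⟨-, hlo⟩ := prod_abs_bound ht1 ht2 hbx1 hbx2
          obtain ⟨hup, -⟩ := prod_abs_bound ht1 ht2 hc21 hc22
          linarith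
    -- the perturbed unit direction
    have hvu : (inner ℝ v u : ℝ) = 0 := (real_inner_comm u v).trans huv
    have huu1 : (inner ℝ u u : ℝ) = 1 := by rw [real_inner_self_eq_norm_sq, hu]; norm_num
    have hvv1 : (inner ℝ v v : ℝ) = 1 := by rw [real_inner_self_eq_norm_sq, hv]; norm_num
    have hinner : (inner ℝ (u + t • v) (u + t • v) : ℝ) = 1 + t^2 := by
      rw [inner_add_left, inner_add_right, inner_add_right, real_inner_smul_left,
        real_inner_smul_left, real_inner_smul_right, real_inner_smul_right, huu1, hvv1, huv, hvu]
      ring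
    have hn2 : ‖u + t • v‖^2 = 1 + t^2 := (real_inner_self_eq_norm_sq _).symm.trans hinner
    have ht2pos : 0 < t^2 := by
      rcases lt_or_gt_of_ne htne with h | h <;> nlinarith
    have hn_pos : 0 < ‖u + t • v‖ := by
      nlinarith [norm_nonneg (u + t • v)]
    have hn_gt1 : 1 < ‖u + t • v‖ := by
      nlinarith [norm_nonneg (u + t • v)]
    have hne0 : u + t • v ≠ 0 := by
      intro h; rw [h, norm_zero] at hn_pos; linarith
    set n : ℝ := ‖u + t • v‖ with hndef
    have hu' : ‖n⁻¹ • (u + t • v)‖ = 1 := norm_smul_inv_norm hne0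
    have hinv : (0:ℝ) < n⁻¹ := inv_pos.2 hn_pos
    have e1 : suppFn P (n⁻¹ • (u + t • v)) = n⁻¹ * (h₁ + t * c₁) := by
      rw [suppFn_smul hPV hV _ hinv, hsupp1]
    have e2 : suppFn P (-(n⁻¹ • (u + t • v))) = n⁻¹ * (h₂ - t * c₂) := by
      rw [show -(n⁻¹ • (u + t • v)) = n⁻¹ • (-(u + t • v)) from (smul_neg _ _).symm,
        suppFn_smul hPV hV _ hinv, hsupp2]
    have hchain : minWidth P ≤ n⁻¹ * ((h₁ + h₂) + t * (c₁ - c₂)) := by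
      have := hmw_le _ hu'
      rw [dirWidth, e1, e2] at this
      calc minWidth P ≤ n⁻¹ * (h₁ + t * c₁) + n⁻¹ * (h₂ - t * c₂) := this
        _ = n⁻¹ * ((h₁ + h₂) + t * (c₁ - c₂)) := by ring
    have hlt : n⁻¹ * ((h₁ + h₂) + t * (c₁ - c₂)) < h₁ + h₂ := by
      have h1 : n⁻¹ * ((h₁ + h₂) + t * (c₁ - c₂)) ≤ n⁻¹ * (h₁ + h₂) :=
        mul_le_mul_of_nonneg_left (by linarith) hinv.le
      have h2 : n⁻¹ * (h₁ + h₂) < 1 * (h₁ + h₂) :=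
        mul_lt_mul_of_pos_right (by rw [inv_lt_one_iff₀]; right; exact hn_gt1) hw₀pos
      linarith
    rw [hdist] at hρw
    linarith
  -- conclude W = (ℝ∙u)ᗮ
  have hWeq : W = (ℝ ∙ u)ᗮ := by
    refine le_antisymm hWu ?_
    intro x hx
    have htop : x ∈ W ⊔ Wᗮ := by
      rw [Submodule.sup_orthogonal_of_hasOrthogonalProjection]; trivial
    obtain ⟨a, ha, b, hb, rfl⟩ := Submodule.mem_sup.1 htop
    have hbu : b ∈ (ℝ ∙ u)ᗮ := by
      have hrw : b = (a + b) - a := by abel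
      rw [hrw]
      exact Submodule.sub_mem _ hx (hWu ha)
    by_cases hb0 : b = 0
    · simpa [hb0] using ha
    · exfalso
      apply key (‖b‖⁻¹ • b) (norm_smul_inv_norm hb0)
      · rw [real_inner_smul_right,
          Submodule.mem_orthogonal_singleton_iff_inner_right.1 hbu, mul_zero]
      · exact Submodule.smul_mem _ _ hb
  have hdim : vectorSpan ℝ (F₁ + F₂) = (ℝ ∙ u)ᗮ := by
    rw [vectorSpan_minkowski ⟨x₁, hx₁F⟩ ⟨x₂, hx₂F⟩, ← hWdef, hWeq]
  have hu0 : u ≠ 0 := by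
    intro h; rw [h, norm_zero] at hu; norm_num at hu
  have hrk1 : Module.finrank ℝ (ℝ ∙ u : Submodule ℝ (Euc d)) = 1 := finrank_span_singleton hu0
  have hsum := Submodule.finrank_add_finrank_orthogonal (K := (ℝ ∙ u : Submodule ℝ (Euc d)))
  rw [hrk1, finrank_euclideanSpace_fin] at hsum
  rw [affDim, direction_affineSpan, hdim]
  omega
end
end

section
/- Let P ⊆ ℝ^d be a centrally symmetric polytope with nonempty interior, and let F₁ and F₂ be a strictly antipodal pair of faces of P whose distance ρ(F₁,F₂) equals the minimum width ω(P). Then both F₁ and F₂ have affine dimension d − 1, i.e., both are facets of P. -/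
open Set Metric Pointwise

noncomputable section

variable {d : ℕ}

lemma suppFn_set_eq (K : Set (Euc d)) (u : Euc d) :
    {r | ∃ x ∈ K, r = inner ℝ u x} = (fun x => (inner ℝ u x : ℝ)) '' K := by
  ext r; simp [eq_comm]

lemma inner_le_suppFn {K : Set (Euc d)} (hK : IsCompact K) {x : Euc d} (hx : x ∈ K)
    (u : Euc d) : (inner ℝ u x : ℝ) ≤ suppFn K u := by
  refine le_csSup ?_ ⟨x, hx, rfl⟩
  rw [suppFn_set_eq]
  exact (hK.image (continuous_const.inner continuous_id)).bddAbove

lemma suppFn_le {K : Set (Euc d)} (hne : K.Nonempty) {u : Euc d} {b : ℝ}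
    (h : ∀ x ∈ K, (inner ℝ u x : ℝ) ≤ b) : suppFn K u ≤ b := by
  apply csSup_le
  · obtain ⟨x, hx⟩ := hne; exact ⟨_, x, hx, rfl⟩
  · rintro r ⟨x, hx, rfl⟩; exact h x hx

lemma exists_suppFn {K : Set (Euc d)} (hK : IsCompact K) (hne : K.Nonempty) (u : Euc d) :
    ∃ x ∈ K, (inner ℝ u x : ℝ) = suppFn K u := by
  obtain ⟨x, hx, hmax⟩ := hK.exists_isMaxOn (f := fun x => (inner ℝ u x : ℝ)) hne
    (Continuous.continuousOn (continuous_const.inner continuous_id))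
  refine ⟨x, hx, le_antisymm (inner_le_suppFn hK hx u) (suppFn_le ⟨x, hx⟩ ?_)⟩
  exact fun y hy => hmax hy

/-- Support function at `-u` for a centrally symmetric set. -/
lemma suppFn_neg_symm {P : Set (Euc d)} (hK : IsCompact P) (hne : P.Nonempty)
    {c : Euc d} (hc : ∀ x ∈ P, c + c - x ∈ P) (u : Euc d) :
    suppFn P (-u) = suppFn P u - 2 * (inner ℝ u c : ℝ) := by
  have key : ∀ v : Euc d, ∀ x ∈ P, (inner ℝ (-v) x : ℝ) = (inner ℝ v (c + c - x) : ℝ) - 2 * inner ℝ v c := by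
    intro v x _
    simp [inner_sub_right, inner_add_right, inner_neg_left]; ring
  apply le_antisymm
  · apply suppFn_le hne
    intro x hx
    rw [key u x hx]
    have := inner_le_suppFn hK (hc x hx) u
    linarith
  · have : suppFn P u ≤ suppFn P (-u) + 2 * (inner ℝ u c : ℝ) := by
      apply suppFn_le hne
      intro x hx
      have h1 : (inner ℝ (-u) (c + c - x) : ℝ) ≤ suppFn P (-u) :=
        inner_le_suppFn hK (hc x hx) (-u)
      have h2 : (inner ℝ (-u) (c + c - x) : ℝ) = - 2 * inner ℝ u c + inner ℝ u x := by
        simp [inner_sub_right, inner_add_right, inner_neg_left]; ring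
      linarith
    linarith

lemma dirWidth_symm {P : Set (Euc d)} (hK : IsCompact P) (hne : P.Nonempty)
    {c : Euc d} (hc : ∀ x ∈ P, c + c - x ∈ P) (u : Euc d) :
    dirWidth P u = 2 * (suppFn P u - (inner ℝ u c : ℝ)) := by
  rw [dirWidth, suppFn_neg_symm hK hne hc u]; ring

lemma dirWidth_nonneg {P : Set (Euc d)} (hK : IsCompact P) (hne : P.Nonempty) (u : Euc d) :
    0 ≤ dirWidth P u := by
  obtain ⟨x, hx⟩ := hne
  have h1 := inner_le_suppFn hK hx u
  have h2 := inner_le_suppFn hK hx (-u)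
  have : (inner ℝ (-u) x : ℝ) = - inner ℝ u x := by simp
  rw [this] at h2
  unfold dirWidth; linarith

lemma minWidth_le_dirWidth {P : Set (Euc d)} (hK : IsCompact P) (hne : P.Nonempty)
    {u : Euc d} (hu : ‖u‖ = 1) : minWidth P ≤ dirWidth P u := by
  refine csInf_le ⟨0, ?_⟩ ⟨u, hu, rfl⟩
  rintro r ⟨v, hv, rfl⟩
  exact dirWidth_nonneg hK hne v

lemma minWidth_pos {P : Set (Euc d)} (hK : IsCompact P)
    (hint : (interior P).Nonempty) {u₀ : Euc d} (hu₀ : ‖u₀‖ = 1) :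
    0 < minWidth P := by
  obtain ⟨x₀, hx₀⟩ := hint
  obtain ⟨ε, hε, hball⟩ := Metric.isOpen_iff.1 isOpen_interior x₀ hx₀
  have hsub : Metric.ball x₀ ε ⊆ P := hball.trans interior_subset
  have hne : P.Nonempty := ⟨x₀, hsub (Metric.mem_ball_self hε)⟩
  have : ∀ r ∈ {r | ∃ u : Euc d, ‖u‖ = 1 ∧ r = dirWidth P u}, ε ≤ r := by
    rintro r ⟨v, hv, rfl⟩
    have hp : x₀ + (ε/2) • v ∈ P := by
      apply hsub; rw [Metric.mem_ball, dist_eq_norm]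
      simp only [add_sub_cancel_left, norm_smul, hv]
      rw [Real.norm_eq_abs, abs_of_pos (by linarith), mul_one]; linarith
    have hm : x₀ - (ε/2) • v ∈ P := by
      apply hsub; rw [Metric.mem_ball, dist_eq_norm]
      simp only [sub_sub_cancel_left, norm_neg, norm_smul, hv]
      rw [Real.norm_eq_abs, abs_of_pos (by linarith), mul_one]; linarith
    have h1 := inner_le_suppFn hK hp v
    have h2 := inner_le_suppFn hK hm (-v)
    have e1 : (inner ℝ v (x₀ + (ε/2) • v) : ℝ) = inner ℝ v x₀ + ε/2 := by
      rw [inner_add_right, real_inner_smul_right, real_inner_self_eq_norm_sq, hv]; ring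
    have e2 : (inner ℝ (-v) (x₀ - (ε/2) • v) : ℝ) = - inner ℝ v x₀ + ε/2 := by
      rw [inner_neg_left, inner_sub_right, real_inner_smul_right, real_inner_self_eq_norm_sq, hv]
      ring
    rw [e1] at h1; rw [e2] at h2
    unfold dirWidth; linarith
  calc (0:ℝ) < ε := hε
    _ ≤ minWidth P := le_csInf ⟨_, u₀, hu₀, rfl⟩ this

/-- Support function of a convex hull is bounded by bound on generators. -/
lemma suppFn_hull_le {V : Set (Euc d)} {u : Euc d} {b : ℝ} (hne : V.Nonempty)
    (h : ∀ x ∈ V, (inner ℝ u x : ℝ) ≤ b) : suppFn (convexHull ℝ V) u ≤ b := by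
  apply suppFn_le (hne.mono (subset_convexHull ℝ V))
  intro x hx
  have hconv : Convex ℝ {w : Euc d | (inner ℝ u w : ℝ) ≤ b} :=
    convex_halfSpace_le ⟨fun a b' => inner_add_right u a b', fun r a => by
      rw [real_inner_smul_right]; simp [smul_eq_mul]⟩ b
  exact convexHull_min h hconv hx

lemma suppFn_hull_eq_sup' {Vf : Finset (Euc d)} (hV : Vf.Nonempty) (v : Euc d) :
    suppFn (convexHull ℝ (Vf : Set (Euc d))) v = Vf.sup' hV (fun x => (inner ℝ v x : ℝ)) := by
  have hPc : IsCompact (convexHull ℝ (Vf : Set (Euc d))) :=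
    Vf.finite_toSet.isCompact_convexHull ℝ
  apply le_antisymm
  · exact suppFn_hull_le hV (fun x hx => Finset.le_sup' _ hx)
  · apply Finset.sup'_le
    intro x hx
    exact inner_le_suppFn hPc (subset_convexHull ℝ _ hx) v

/-- For directions close to `u`, the support of the hull is attained on a
maximizer of `u`. -/
lemma perturb_suppFn {Vf : Finset (Euc d)} (hV : Vf.Nonempty) (u : Euc d) :
    ∃ ε > (0:ℝ), ∀ v : Euc d, ‖v - u‖ < ε →
      ∃ x ∈ Vf, (inner ℝ u x : ℝ) = suppFn (convexHull ℝ (Vf : Set (Euc d))) u ∧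
        (inner ℝ v x : ℝ) = suppFn (convexHull ℝ (Vf : Set (Euc d))) v := by
  classical
  set P := convexHull ℝ (Vf : Set (Euc d)) with hPdef
  set h := suppFn P u with hh
  set M : Finset (Euc d) := Vf.filter (fun x => (inner ℝ u x : ℝ) = h) with hM
  -- maximizer of u
  obtain ⟨xs, hxs, hmaxs⟩ := Vf.exists_max_image (fun x => (inner ℝ u x : ℝ)) hV
  have hxsM : (inner ℝ u xs : ℝ) = h := by
    rw [hh, suppFn_hull_eq_sup' hV u]
    exact le_antisymm (Finset.le_sup' _ hxs) (Finset.sup'_le hV _ hmaxs)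
  set N : Finset (Euc d) := Vf \ M with hN
  set R : ℝ := Vf.sup' hV (fun x => ‖x‖) + 1 with hR
  have hRx : ∀ x ∈ Vf, ‖x‖ ≤ R := by
    intro x hx
    have := Finset.le_sup' (fun x : Euc d => ‖x‖) hx
    rw [hR]; linarith
  have hR1 : (1:ℝ) ≤ R := by
    have h0 : (0:ℝ) ≤ ‖xs‖ := norm_nonneg _
    have := Finset.le_sup' (fun x : Euc d => ‖x‖) hxs
    rw [hR]; linarith
  by_cases hNe : N.Nonempty
  · set δ : ℝ := N.inf' hNe (fun x => h - (inner ℝ u x : ℝ)) with hδ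
    have hδpos : 0 < δ := by
      rw [hδ, Finset.lt_inf'_iff]
      intro x hx
      rw [hN, Finset.mem_sdiff] at hx
      obtain ⟨hxV, hxM⟩ := hx
      have hle : (inner ℝ u x : ℝ) ≤ h := by
        rw [hh, suppFn_hull_eq_sup' hV u]; exact Finset.le_sup' _ hxV
      have hneq : (inner ℝ u x : ℝ) ≠ h := by
        intro hcon; exact hxM (Finset.mem_filter.2 ⟨hxV, hcon⟩)
      cases lt_or_eq_of_le hle with
      | inl hlt => linarith
      | inr heq => exact absurd heq hneq
    refine ⟨δ / (2 * R + 1), by positivity, ?_⟩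
    intro v hv
    obtain ⟨y, hy, hmaxy⟩ := Vf.exists_max_image (fun x => (inner ℝ v x : ℝ)) hV
    have hyv : (inner ℝ v y : ℝ) = suppFn P v := by
      rw [hPdef, suppFn_hull_eq_sup' hV v]
      exact le_antisymm (Finset.le_sup' _ hy) (Finset.sup'_le hV _ hmaxy)
    refine ⟨y, hy, ?_, hyv⟩
    by_contra hyM
    have hyN : y ∈ N := by
      rw [hN, Finset.mem_sdiff]
      exact ⟨hy, fun hmem => hyM ((Finset.mem_filter.1 hmem).2)⟩
    have hδy : δ ≤ h - (inner ℝ u y : ℝ) := Finset.inf'_le _ hyN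
    -- bounds
    have b1 : (inner ℝ (v - u) y : ℝ) ≤ ‖v - u‖ * ‖y‖ := real_inner_le_norm _ _
    have b2 : -(‖v - u‖ * ‖xs‖) ≤ (inner ℝ (v - u) xs : ℝ) := by
      have := abs_real_inner_le_norm (v - u) xs
      rw [abs_le] at this; exact this.1
    have e1 : (inner ℝ v y : ℝ) = inner ℝ u y + inner ℝ (v - u) y := by
      rw [inner_sub_left]; ring
    have e2 : (inner ℝ v xs : ℝ) = inner ℝ u xs + inner ℝ (v - u) xs := by
      rw [inner_sub_left]; ring
    have hcmp : (inner ℝ v xs : ℝ) ≤ inner ℝ v y := hmaxy xs hxs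
    have hyR : ‖y‖ ≤ R := hRx y hy
    have hxsR : ‖xs‖ ≤ R := hRx xs hxs
    have hvn : (0:ℝ) ≤ ‖v - u‖ := norm_nonneg _
    have key : ‖v - u‖ * ‖y‖ ≤ ‖v - u‖ * R := by
      exact mul_le_mul_of_nonneg_left hyR hvn
    have key2 : ‖v - u‖ * ‖xs‖ ≤ ‖v - u‖ * R := mul_le_mul_of_nonneg_left hxsR hvn
    have hεR : ‖v - u‖ * R < δ / 2 := by
      have h2R : (0:ℝ) < 2 * R + 1 := by linarith
      rw [lt_div_iff₀ h2R] at hv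
      nlinarith
    nlinarith [hxsM, hδy]
  · refine ⟨1, one_pos, ?_⟩
    intro v hv
    obtain ⟨y, hy, hmaxy⟩ := Vf.exists_max_image (fun x => (inner ℝ v x : ℝ)) hV
    have hyM : y ∈ M := by
      by_contra hyM
      exact hNe ⟨y, by rw [hN, Finset.mem_sdiff]; exact ⟨hy, hyM⟩⟩
    refine ⟨y, hy, (Finset.mem_filter.1 hyM).2, ?_⟩
    rw [hPdef, suppFn_hull_eq_sup' hV v]
    exact le_antisymm (Finset.le_sup' _ hy) (Finset.sup'_le hV _ hmaxy)

lemma affDist_comm (A B : Set (Euc d)) : affDist A B = affDist B A := by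
  unfold affDist
  congr 1
  ext r
  constructor
  · rintro ⟨x, hx, y, hy, rfl⟩; exact ⟨y, hy, x, hx, dist_comm x y⟩
  · rintro ⟨x, hx, y, hy, rfl⟩; exact ⟨y, hy, x, hx, dist_comm x y⟩

set_option maxHeartbeats 1600000 in
lemma core_facet {d : ℕ} {P F₁ : Set (Euc d)} (hP : IsPolytope P)
    (hint : (interior P).Nonempty) {c : Euc d} (hc : ∀ x ∈ P, c + c - x ∈ P)
    {u : Euc d} (hu : ‖u‖ = 1) (h1 : suppSet P u = F₁)
    (hdist : affDist F₁ (suppSet P (-u)) = minWidth P) : affDim F₁ = d - 1 := by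
  classical
  obtain ⟨Vf, hPV⟩ := hP
  have hPc : IsCompact P := by rw [hPV]; exact Vf.finite_toSet.isCompact_convexHull ℝ
  have hPne : P.Nonempty := hint.mono interior_subset
  have hV : Vf.Nonempty := by
    rw [Finset.nonempty_iff_ne_empty]
    rintro rfl
    simp only [Finset.coe_empty, convexHull_empty] at hPV
    exact hPne.ne_empty hPV
  have hu0 : u ≠ 0 := by intro h; rw [h, norm_zero] at hu; exact one_ne_zero hu.symm
  -- a point of F₁
  obtain ⟨a, haP, ha⟩ := exists_suppFn hPc hPne u
  have haF : a ∈ F₁ := by rw [← h1]; exact ⟨haP, ha⟩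
  set S₁ := affineSpan ℝ F₁ with hS₁
  set Vd := S₁.direction with hVd
  have haS : a ∈ S₁ := subset_affineSpan ℝ F₁ haF
  -- u is orthogonal to the direction of F₁
  have hVd_le : Vd ≤ (ℝ ∙ u)ᗮ := by
    rw [hVd, hS₁, direction_affineSpan, vectorSpan_def]
    apply Submodule.span_le.2
    rintro z ⟨x, hx, y, hy, rfl⟩
    rw [SetLike.mem_coe, Submodule.mem_orthogonal_singleton_iff_inner_right]
    have hxF : (inner ℝ u x : ℝ) = suppFn P u := by rw [← h1] at hx; exact hx.2
    have hyF : (inner ℝ u y : ℝ) = suppFn P u := by rw [← h1] at hy; exact hy.2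
    show (inner ℝ u (x -ᵥ y) : ℝ) = 0
    rw [vsub_eq_sub, inner_sub_right, hxF, hyF, sub_self]
  have huV : u ∈ Vdᗮ := by
    rw [Submodule.mem_orthogonal]
    intro z hz
    have := hVd_le hz
    rw [Submodule.mem_orthogonal_singleton_iff_inner_right] at this
    rw [real_inner_comm]; exact this
  -- decomposition of a - c
  set q : Euc d := (Vd.orthogonalProjectionOnto (a - c) : Euc d) with hq
  have hqV : q ∈ Vd := SetLike.coe_mem _
  set p : Euc d := (a - c) - q with hp
  have hpO : p ∈ Vdᗮ := Submodule.sub_starProjection_mem_orthogonal (a - c)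
  have hinner_p : ∀ v : Euc d, v ∈ Vdᗮ → (inner ℝ v (a - c) : ℝ) = inner ℝ v p := by
    intro v hv
    have h0 : (inner ℝ v q : ℝ) = 0 := by
      rw [Submodule.mem_orthogonal] at hv
      rw [real_inner_comm]; exact hv q hqV
    have : (inner ℝ v p : ℝ) = inner ℝ v (a-c) - inner ℝ v q := by rw [hp, inner_sub_right]
    rw [this, h0, sub_zero]
  -- the opposite face is the reflection of F₁
  have hsFn : suppFn P (-u) = suppFn P u - 2 * (inner ℝ u c : ℝ) := suppFn_neg_symm hPc hPne hc u
  have hF2img : suppSet P (-u) = (fun x => c + c - x) '' F₁ := by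
    ext x
    simp only [Set.mem_image]
    constructor
    · rintro ⟨hxP, hxe⟩
      refine ⟨c + c - x, ?_, by abel⟩
      rw [← h1]
      refine ⟨hc x hxP, ?_⟩
      have hxe' : (inner ℝ (-u) x : ℝ) = suppFn P u - 2 * inner ℝ u c := by
        rw [← hsFn]; exact hxe
      show (inner ℝ u (c + c - x) : ℝ) = suppFn P u
      rw [inner_sub_right, inner_add_right]
      rw [inner_neg_left] at hxe'
      linarith
    · rintro ⟨z, hzF, rfl⟩
      rw [← h1] at hzF
      obtain ⟨hzP, hze⟩ := hzF
      refine ⟨hc z hzP, ?_⟩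
      show (inner ℝ (-u) (c + c - z) : ℝ) = suppFn P (-u)
      rw [hsFn, inner_neg_left, inner_sub_right, inner_add_right]
      have : (inner ℝ u z : ℝ) = suppFn P u := hze
      linarith
  have hmem2 : ∀ y : Euc d, y ∈ affineSpan ℝ (suppSet P (-u)) ↔ c + c - y ∈ S₁ := by
    have heq : (fun x : Euc d => c + c - x) = ⇑((AffineEquiv.pointReflection ℝ c).toAffineMap) := by
      funext x
      simp only [AffineEquiv.coe_toAffineMap, AffineEquiv.pointReflection_apply,
        vsub_eq_sub, vadd_eq_add]
      abel
    intro y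
    rw [hF2img, heq, ← AffineSubspace.map_span, AffineSubspace.mem_map]
    constructor
    · rintro ⟨z, hz, rfl⟩
      have : c + c - ((AffineEquiv.pointReflection ℝ c).toAffineMap z) = z := by
        simp only [AffineEquiv.coe_toAffineMap, AffineEquiv.pointReflection_apply,
          vsub_eq_sub, vadd_eq_add]
        abel
      rw [this]; exact hz
    · intro hzy
      refine ⟨c + c - y, hzy, ?_⟩
      simp only [AffineEquiv.coe_toAffineMap, AffineEquiv.pointReflection_apply,
        vsub_eq_sub, vadd_eq_add]
      abel
  -- affDist F₁ F₂ = 2 ‖p‖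
  have haff : affDist F₁ (suppSet P (-u)) = 2 * ‖p‖ := by
    apply le_antisymm
    · -- upper bound: witness x₀ = a - q, y₀ = c + c - x₀
      have hx₀ : a - q ∈ S₁ := by
        have : a - q = (-q) +ᵥ a := by simp [vadd_eq_add]; abel
        rw [this]
        exact AffineSubspace.vadd_mem_of_mem_direction (neg_mem hqV) haS
      have hy₀ : c + c - (a - q) ∈ affineSpan ℝ (suppSet P (-u)) := by
        rw [hmem2]
        have : c + c - (c + c - (a - q)) = a - q := by abel
        rw [this]; exact hx₀
      refine csInf_le ⟨0, ?_⟩ ⟨a - q, hx₀, c + c - (a - q), hy₀, ?_⟩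
      · rintro r ⟨x, hx, y, hy, rfl⟩; exact dist_nonneg
      · rw [dist_eq_norm]
        have : (a - q) - (c + c - (a - q)) = p + p := by rw [hp]; abel
        rw [this]
        have : ‖p + p‖ = 2 * ‖p‖ := by
          rw [show p + p = (2:ℝ) • p by module, norm_smul]
          simp
        rw [this]
    · -- lower bound
      apply le_csInf
      · exact ⟨_, a, subset_affineSpan ℝ F₁ haF, c + c - a, by rw [SetLike.mem_coe, hmem2]; simpa using haS, rfl⟩
      · rintro r ⟨x, hx, y, hy, rfl⟩
        have hxS : x ∈ S₁ := hx
        have hzS : c + c - y ∈ S₁ := (hmem2 y).1 hy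
        have hdecomp : x - y = ((x - a) + ((c + c - y) - a) + (q + q)) + (p + p) := by
          rw [hp]; abel
        set wv : Euc d := (x - a) + ((c + c - y) - a) + (q + q) with hwv
        have hwvV : wv ∈ Vd := by
          refine add_mem (add_mem ?_ ?_) (add_mem hqV hqV)
          · have := AffineSubspace.vsub_mem_direction hxS haS
            rwa [vsub_eq_sub] at this
          · have := AffineSubspace.vsub_mem_direction hzS haS
            rwa [vsub_eq_sub] at this
        have hip : (inner ℝ p (x - y) : ℝ) = 2 * ‖p‖^2 := by
          rw [hdecomp, inner_add_right]
          have h0 : (inner ℝ p wv : ℝ) = 0 := by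
            rw [Submodule.mem_orthogonal] at hpO
            rw [real_inner_comm]; exact hpO wv hwvV
          rw [h0, zero_add, inner_add_right, real_inner_self_eq_norm_sq]; ring
        have hcs : (inner ℝ p (x - y) : ℝ) ≤ ‖p‖ * ‖x - y‖ := real_inner_le_norm _ _
        rw [dist_eq_norm]
        rcases eq_or_lt_of_le (norm_nonneg p) with hp0 | hp0
        · rw [← hp0]; simpa using norm_nonneg (x - y)
        · nlinarith
  -- identify the minimum width
  have h2p : 2 * ‖p‖ = minWidth P := by rw [← haff, hdist]
  have hwidth_u : dirWidth P u = 2 * (inner ℝ u p : ℝ) := by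
    rw [dirWidth_symm hPc hPne hc u]
    have e : suppFn P u - (inner ℝ u c : ℝ) = inner ℝ u (a - c) := by
      rw [inner_sub_right, ← ha]
    rw [e, hinner_p u huV]
  have hup_le : (inner ℝ u p : ℝ) ≤ ‖p‖ := by
    have := real_inner_le_norm u p
    rw [hu, one_mul] at this; exact this
  have hup : (inner ℝ u p : ℝ) = ‖u‖ * ‖p‖ := by
    have hge := minWidth_le_dirWidth hPc hPne hu
    rw [hwidth_u, ← h2p] at hge
    rw [hu, one_mul]
    linarith
  have hpu : p = ‖p‖ • u := by
    have h' := inner_eq_norm_mul_iff_real.1 hup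
    rw [hu, one_smul] at h'
    exact h'.symm
  have hppos : 0 < ‖p‖ := by
    have := minWidth_pos hPc hint hu
    linarith
  -- suppose F₁ is not a facet
  by_contra hne
  have hdim : affDim F₁ = Module.finrank ℝ Vd := rfl
  rw [hdim] at hne
  have f1 : Module.finrank ℝ Vd + Module.finrank ℝ Vdᗮ = d := by
    have h0 := Submodule.finrank_add_finrank_orthogonal (K := Vd)
    rwa [finrank_euclideanSpace_fin] at h0
  have f5 : Module.finrank ℝ (ℝ ∙ u) = 1 := finrank_span_singleton hu0
  have f2 : Module.finrank ℝ (ℝ ∙ u) + Module.finrank ℝ ((ℝ ∙ u)ᗮ) = d := by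
    have h0 := Submodule.finrank_add_finrank_orthogonal (K := (ℝ ∙ u))
    rwa [finrank_euclideanSpace_fin] at h0
  have fle : Module.finrank ℝ Vd ≤ Module.finrank ℝ ((ℝ ∙ u)ᗮ) :=
    Submodule.finrank_mono hVd_le
  set W : Submodule ℝ (Euc d) := Vdᗮ ⊓ (ℝ ∙ u)ᗮ with hW
  have f3 : Module.finrank ℝ ↥(Vdᗮ ⊔ (ℝ ∙ u)ᗮ) + Module.finrank ℝ W =
      Module.finrank ℝ Vdᗮ + Module.finrank ℝ ((ℝ ∙ u)ᗮ) :=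
    Submodule.finrank_sup_add_finrank_inf_eq _ _
  have f4 : Module.finrank ℝ ↥(Vdᗮ ⊔ (ℝ ∙ u)ᗮ) ≤ d := by
    have h0 := Submodule.finrank_le (Vdᗮ ⊔ (ℝ ∙ u)ᗮ)
    rwa [finrank_euclideanSpace_fin] at h0
  have hWpos : 0 < Module.finrank ℝ W := by omega
  have hWne : W ≠ ⊥ := by
    intro h
    rw [h, finrank_bot] at hWpos
    omega
  obtain ⟨w', hw'W, hw'0⟩ := Submodule.ne_bot_iff W |>.1 hWne
  set w : Euc d := ‖w'‖⁻¹ • w' with hw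
  have hwn : ‖w‖ = 1 := norm_smul_inv_norm hw'0
  have hwW : w ∈ W := Submodule.smul_mem _ _ hw'W
  obtain ⟨hwV, hwu'⟩ := Submodule.mem_inf.1 hwW
  have hwu : (inner ℝ u w : ℝ) = 0 :=
    Submodule.mem_orthogonal_singleton_iff_inner_right.1 hwu'
  -- perturbation
  obtain ⟨ε, hε, hpert⟩ := perturb_suppFn hV u
  set t : ℝ := ε/3 with ht
  have htpos : 0 < t := by positivity
  set s : ℝ := Real.sqrt (1 + t^2) with hs
  have hs1 : 1 < s := by
    rw [hs]
    calc (1:ℝ) = Real.sqrt 1 := Real.sqrt_one.symm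
      _ < Real.sqrt (1 + t^2) := Real.sqrt_lt_sqrt (by norm_num)
          (by have h2 : 0 < t^2 := pow_pos htpos 2; linarith)
  have hspos : 0 < s := by linarith
  set v : Euc d := s⁻¹ • (u + t • w) with hv
  have hsum_sq : ‖u + t • w‖^2 = 1 + t^2 := by
    rw [norm_add_sq_real, hu, real_inner_smul_right, hwu, norm_smul, hwn, Real.norm_eq_abs]
    rw [mul_one, sq_abs]
    ring
  have hsum : ‖u + t • w‖ = s := by
    have h0 := Real.sqrt_sq (norm_nonneg (u + t • w))
    rw [hsum_sq] at h0
    exact h0.symm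
  have hvn : ‖v‖ = 1 := by
    rw [hv, norm_smul, hsum, Real.norm_eq_abs, abs_inv, abs_of_pos hspos,
      inv_mul_cancel₀ (ne_of_gt hspos)]
  have hsinv_pos : 0 < s⁻¹ := by positivity
  have hsinv_le : s⁻¹ ≤ 1 := by
    rw [inv_le_one_iff₀]; right; linarith
  have hst : s ≤ 1 + t := by
    rw [hs]
    have : (1:ℝ) + t^2 ≤ (1+t)^2 := by nlinarith
    calc Real.sqrt (1 + t^2) ≤ Real.sqrt ((1+t)^2) := Real.sqrt_le_sqrt this
      _ = 1 + t := Real.sqrt_sq (by linarith)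
  have hvu : ‖v - u‖ < ε := by
    have hdecv : v - u = (s⁻¹ - 1) • u + (s⁻¹ * t) • w := by
      rw [hv]; module
    rw [hdecv]
    have hb : ‖(s⁻¹ - 1) • u + (s⁻¹ * t) • w‖ ≤ |s⁻¹ - 1| + |s⁻¹ * t| := by
      calc ‖(s⁻¹ - 1) • u + (s⁻¹ * t) • w‖ ≤ ‖(s⁻¹ - 1) • u‖ + ‖(s⁻¹ * t) • w‖ :=
            norm_add_le _ _
        _ = |s⁻¹ - 1| + |s⁻¹ * t| := by
            rw [norm_smul, norm_smul, hu, hwn, mul_one, mul_one, Real.norm_eq_abs,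
              Real.norm_eq_abs]
    have e1 : |s⁻¹ - 1| = 1 - s⁻¹ := by rw [abs_of_nonpos (by linarith)]; ring
    have e2 : |s⁻¹ * t| = s⁻¹ * t := abs_of_pos (by positivity)
    have e3 : 1 - s⁻¹ ≤ s - 1 := by
      have h' : (s - 1)^2 ≥ 0 := sq_nonneg _
      have : s * (s + s⁻¹ - 2) ≥ 0 := by
        rw [mul_sub, mul_add, mul_inv_cancel₀ (ne_of_gt hspos)]
        nlinarith
      nlinarith
    have e4 : s⁻¹ * t ≤ t := by nlinarith
    rw [e1, e2] at hb
    have : s - 1 ≤ t := by linarith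
    calc ‖(s⁻¹ - 1) • u + (s⁻¹ * t) • w‖ ≤ (1 - s⁻¹) + s⁻¹ * t := hb
      _ ≤ (s - 1) + t := by linarith
      _ ≤ t + t := by linarith
      _ < ε := by rw [ht]; linarith
  have hvV : v ∈ Vdᗮ :=
    Submodule.smul_mem _ _ (add_mem huV (Submodule.smul_mem _ _ hwV))
  obtain ⟨x, hxVf, hxu, hxv⟩ := hpert v hvu
  rw [← hPV] at hxu hxv
  have hxF : x ∈ F₁ := by
    rw [← h1]
    exact ⟨by rw [hPV]; exact subset_convexHull ℝ _ hxVf, hxu⟩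
  have hxa : (inner ℝ v x : ℝ) = inner ℝ v a := by
    have hxa' : x - a ∈ Vd := by
      have := AffineSubspace.vsub_mem_direction (subset_affineSpan ℝ F₁ hxF) haS
      rwa [vsub_eq_sub] at this
    have h0 : (inner ℝ v (x - a) : ℝ) = 0 := by
      rw [Submodule.mem_orthogonal] at hvV
      rw [real_inner_comm]; exact hvV _ hxa'
    rw [inner_sub_right] at h0
    linarith
  have hsvp : suppFn P v = inner ℝ v a := by rw [← hxv, hxa]
  have hdw : dirWidth P v = 2 * (inner ℝ v p : ℝ) := by
    rw [dirWidth_symm hPc hPne hc v, hsvp]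
    have e : (inner ℝ v a : ℝ) - inner ℝ v c = inner ℝ v (a - c) := by rw [inner_sub_right]
    rw [e, hinner_p v hvV]
  have hvp : (inner ℝ v p : ℝ) = s⁻¹ * ‖p‖ := by
    have hwu2 : (inner ℝ w u : ℝ) = 0 := by rw [real_inner_comm]; exact hwu
    have e : (inner ℝ v u : ℝ) = s⁻¹ := by
      rw [hv, real_inner_smul_left, inner_add_left, real_inner_self_eq_norm_sq, hu,
        real_inner_smul_left, hwu2]
      ring
    have e2 : (inner ℝ v p : ℝ) = ‖p‖ * inner ℝ v u := by
      conv_lhs => rw [hpu]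
      rw [real_inner_smul_right]
    rw [e2, e]; ring
  have hlt : dirWidth P v < minWidth P := by
    rw [hdw, hvp, ← h2p]
    have hsl : s⁻¹ < 1 := by
      rw [inv_lt_one_iff₀]; right; exact hs1
    nlinarith
  exact absurd (minWidth_le_dirWidth hPc hPne hvn) (not_le.2 hlt)

/-- If `P ⊆ ℝ^d` is a centrally symmetric polytope with nonempty interior and `F₁`,
`F₂` are strictly antipodal faces of `P` whose distance equals the minimum width of
`P`, then both `F₁` and `F₂` have affine dimension `d - 1`, i.e., both are facets. -/
theorem gritzmann_klee_centrally_symmetric {d : ℕ} (P F₁ F₂ : Set (Euc d))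
    (hP : IsPolytope P) (hint : (interior P).Nonempty)
    (hsym : ∃ c : Euc d, (fun x => c + c - x) '' P = P)
    (hF₁ : IsFaceOf P F₁) (hF₂ : IsFaceOf P F₂)
    (hanti : StrictlyAntipodal P F₁ F₂)
    (hdist : affDist F₁ F₂ = minWidth P) :
    affDim F₁ = d - 1 ∧ affDim F₂ = d - 1 := by
  obtain ⟨c, hcimg⟩ := hsym
  have hc : ∀ x ∈ P, c + c - x ∈ P := by
    intro x hx
    rw [← hcimg]; exact Set.mem_image_of_mem _ hx
  obtain ⟨_, u, hu, h1, h2⟩ := hanti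
  constructor
  · exact core_facet hP hint hc hu h1 (by rw [h2, hdist])
  · refine core_facet hP hint hc (u := -u) (by rw [norm_neg, hu]) h2 ?_
    rw [neg_neg, h1, affDist_comm, hdist]
end
end
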